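/- Let μ₀ ∈ ℝ, σ₀ > 0 and η > 1/2 be fixed, and for each K ≥ 2 let μ_1, …, μ_K be i.i.d. N(μ₀, σ₀²) random variables, μ_* = max_{1≤k≤K} μ_k, J = #{k : μ_k < μ_*}, and Δ_K = (log K)^{−η}. Then P( max_{k: μ_k < μ_*} μ_k ≤ μ_* − Δ_K, max_{1≤k≤K} |μ_k| ≤ Δ_K^{−1}, and J ≥ Δ_K·K ) → 1 as K → ∞. -/

import Mathlib

open MeasureTheory ProbabilityTheory Filter Set
open scoped ENNReal

set_option maxHeartbeats 1000000

namespace Stmt5Aux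

noncomputable def gpdf (μ₀ σ₀ : ℝ) (x : ℝ) : ℝ :=
  gaussianPDFReal μ₀ ⟨σ₀^2, sq_nonneg σ₀⟩ x

lemma gpdf_def (μ₀ σ₀ x : ℝ) :
    gpdf μ₀ σ₀ x = (Real.sqrt (2 * Real.pi * σ₀^2))⁻¹ * Real.exp (-(x - μ₀)^2 / (2 * σ₀^2)) :=
  rfl

lemma gpdf_nonneg (μ₀ σ₀ x : ℝ) : 0 ≤ gpdf μ₀ σ₀ x :=
  gaussianPDFReal_nonneg _ _ _

lemma gpdf_affine (μ₀ : ℝ) {σ₀ : ℝ} (hσ₀ : 0 < σ₀) (u : ℝ) :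
    gpdf μ₀ σ₀ (μ₀ + σ₀ * u) = (σ₀ * Real.sqrt (2 * Real.pi))⁻¹ * Real.exp (-u^2 / 2) := by
  rw [gpdf_def]
  have h1 : Real.sqrt (2 * Real.pi * σ₀^2) = σ₀ * Real.sqrt (2 * Real.pi) := by
    rw [mul_comm (2 * Real.pi) (σ₀^2), Real.sqrt_mul (sq_nonneg σ₀),
      Real.sqrt_sq hσ₀.le]
  rw [h1]
  congr 1
  have : (μ₀ + σ₀ * u - μ₀)^2 = σ₀^2 * u^2 := by ring
  rw [this]
  field_simp

lemma gpdf_anti (μ₀ : ℝ) {σ₀ : ℝ} (hσ₀ : 0 < σ₀) {x y : ℝ} (hx : μ₀ ≤ x) (hxy : x ≤ y) :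
    gpdf μ₀ σ₀ y ≤ gpdf μ₀ σ₀ x := by
  rw [gpdf_def, gpdf_def]
  have h2 : (0:ℝ) < 2 * σ₀^2 := by positivity
  have hsq : (x - μ₀)^2 ≤ (y - μ₀)^2 := by nlinarith
  refine mul_le_mul_of_nonneg_left (Real.exp_le_exp.mpr ?_) (by positivity)
  exact (div_le_div_iff_of_pos_right h2).mpr (by nlinarith)


noncomputable def gmeas (μ₀ σ₀ : ℝ) : Measure ℝ := gaussianReal μ₀ ⟨σ₀^2, sq_nonneg σ₀⟩

lemma gvar_ne_zero {σ₀ : ℝ} (hσ₀ : 0 < σ₀) : (⟨σ₀^2, sq_nonneg σ₀⟩ : NNReal) ≠ 0 := by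
  intro h
  have := congrArg (NNReal.toReal) h
  change σ₀^2 = ((0:NNReal):ℝ) at this
  rw [NNReal.coe_zero] at this
  nlinarith

instance (μ₀ σ₀ : ℝ) : IsProbabilityMeasure (gmeas μ₀ σ₀) := by
  unfold gmeas; exact instIsProbabilityMeasureGaussianReal _ _

lemma gmeas_apply (μ₀ : ℝ) {σ₀ : ℝ} (hσ₀ : 0 < σ₀) (s : Set ℝ) :
    gmeas μ₀ σ₀ s = ∫⁻ x in s, ENNReal.ofReal (gpdf μ₀ σ₀ x) :=
  gaussianReal_apply _ (gvar_ne_zero hσ₀) s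

/-- interval upper bound -/
lemma gmeas_Ioo_le (μ₀ : ℝ) {σ₀ : ℝ} (hσ₀ : 0 < σ₀) {b c : ℝ} (hb : μ₀ ≤ b) :
    gmeas μ₀ σ₀ (Set.Ioo b c) ≤ ENNReal.ofReal ((c - b) * gpdf μ₀ σ₀ b) := by
  rcases le_or_gt c b with h | h
  · rw [Set.Ioo_eq_empty_of_le h]; simp
  rw [gmeas_apply μ₀ hσ₀]
  calc ∫⁻ x in Set.Ioo b c, ENNReal.ofReal (gpdf μ₀ σ₀ x)
      ≤ ∫⁻ _x in Set.Ioo b c, ENNReal.ofReal (gpdf μ₀ σ₀ b) := by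
        refine setLIntegral_mono measurable_const fun x hx => ?_
        exact ENNReal.ofReal_le_ofReal (gpdf_anti μ₀ hσ₀ hb hx.1.le)
    _ = ENNReal.ofReal (gpdf μ₀ σ₀ b) * volume (Set.Ioo b c) := setLIntegral_const _ _
    _ = ENNReal.ofReal ((c - b) * gpdf μ₀ σ₀ b) := by
        rw [Real.volume_Ioo, ← ENNReal.ofReal_mul (gpdf_nonneg _ _ _), mul_comm]

/-- interval lower bound -/
lemma le_gmeas_Ioc (μ₀ : ℝ) {σ₀ : ℝ} (hσ₀ : 0 < σ₀) {a s : ℝ} (ha : μ₀ ≤ a) (hs : 0 ≤ s) :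
    ENNReal.ofReal (s * gpdf μ₀ σ₀ (a + s)) ≤ gmeas μ₀ σ₀ (Set.Ioc a (a + s)) := by
  rw [gmeas_apply μ₀ hσ₀]
  calc ENNReal.ofReal (s * gpdf μ₀ σ₀ (a + s))
      = ENNReal.ofReal (gpdf μ₀ σ₀ (a + s)) * volume (Set.Ioc a (a + s)) := by
        rw [Real.volume_Ioc, ← ENNReal.ofReal_mul (gpdf_nonneg _ _ _), mul_comm]
        norm_num
    _ = ∫⁻ _x in Set.Ioc a (a + s), ENNReal.ofReal (gpdf μ₀ σ₀ (a + s)) :=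
        (setLIntegral_const _ _).symm
    _ ≤ ∫⁻ x in Set.Ioc a (a + s), ENNReal.ofReal (gpdf μ₀ σ₀ x) := by
        refine setLIntegral_mono (measurable_gaussianPDFReal _ _).ennreal_ofReal
          fun x hx => ?_
        exact ENNReal.ofReal_le_ofReal (gpdf_anti μ₀ hσ₀ (ha.trans hx.1.le) hx.2)

/-- Mills ratio upper bound -/
lemma gmeas_Ici_le (μ₀ : ℝ) {σ₀ : ℝ} (hσ₀ : 0 < σ₀) {a : ℝ} (ha : μ₀ < a) :
    gmeas μ₀ σ₀ (Set.Ici a) ≤ ENNReal.ofReal (σ₀^2 / (a - μ₀) * gpdf μ₀ σ₀ a) := by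
  have hv := gvar_ne_zero hσ₀
  rw [gmeas, gaussianReal_apply_eq_integral _ hv]
  refine ENNReal.ofReal_le_ofReal ?_
  have hC : (0:ℝ) < 2 * σ₀^2 := by positivity
  set c₀ : ℝ := (Real.sqrt (2 * Real.pi * σ₀^2))⁻¹ with hc₀
  have hc₀pos : 0 < c₀ := by
    rw [hc₀]
    have : (0:ℝ) < 2 * Real.pi * σ₀^2 := by positivity
    positivity
  -- the antiderivative
  set g : ℝ → ℝ := fun x => -(σ₀^2 * c₀ * Real.exp (-(x - μ₀)^2 / (2 * σ₀^2))) with hg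
  have hderiv : ∀ x, HasDerivAt g ((x - μ₀) * gpdf μ₀ σ₀ x) x := by
    intro x
    have h1 : HasDerivAt (fun x : ℝ => -(x - μ₀)^2 / (2 * σ₀^2))
        (-(x - μ₀) / σ₀^2) x := by
      have : HasDerivAt (fun x : ℝ => -(x - μ₀)^2 / (2 * σ₀^2))
          ((-(2 * (x - μ₀))) / (2 * σ₀^2)) x := by
        have hb : HasDerivAt (fun x : ℝ => -(x - μ₀)^2) (-(2 * (x - μ₀))) x := by
          have := ((hasDerivAt_id x).sub_const μ₀).fun_pow 2
          simpa using this.fun_neg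
        exact hb.div_const _
      convert this using 1
      field_simp
    have h2 := (h1.exp).const_mul (σ₀^2 * c₀)
    have h3 := h2.fun_neg
    refine h3.congr_deriv (Eq.symm ?_)
    rw [gpdf_def, ← hc₀]
    have h4 : σ₀^2 ≠ 0 := by positivity
    field_simp
  have hnonneg : ∀ x ∈ Set.Ioi a, 0 ≤ (x - μ₀) * gpdf μ₀ σ₀ x := fun x hx =>
    mul_nonneg (by have := hx.out; linarith) (gpdf_nonneg _ _ _)
  have htend : Tendsto g atTop (nhds 0) := by
    rw [hg]
    have h1 : Tendsto (fun x : ℝ => -(x - μ₀)^2 / (2 * σ₀^2)) atTop atBot := by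
      apply Tendsto.atBot_div_const hC
      apply tendsto_neg_atBot_iff.mpr
      exact (tendsto_pow_atTop (by norm_num)).comp (tendsto_atTop_add_const_right _ _ tendsto_id)
    have := (Real.tendsto_exp_atBot.comp h1).const_mul (σ₀^2 * c₀)
    simpa using this.neg
  have hkey : ∫ x in Set.Ioi a, (x - μ₀) * gpdf μ₀ σ₀ x = σ₀^2 * gpdf μ₀ σ₀ a := by
    have := integral_Ioi_of_hasDerivAt_of_nonneg' (fun x _ => hderiv x) hnonneg htend
    rw [this, hg, gpdf_def]
    ring
  have hint : IntegrableOn (fun x => (x - μ₀) * gpdf μ₀ σ₀ x) (Set.Ioi a) := by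
    exact integrableOn_Ioi_deriv_of_nonneg' (fun x _ => hderiv x) hnonneg htend
  rw [MeasureTheory.integral_Ici_eq_integral_Ioi]
  have hmono : ∫ x in Set.Ioi a, gpdf μ₀ σ₀ x
      ≤ ∫ x in Set.Ioi a, (a - μ₀)⁻¹ * ((x - μ₀) * gpdf μ₀ σ₀ x) := by
    refine setIntegral_mono_on ((integrable_gaussianPDFReal μ₀ _).restrict)
      (hint.const_mul _) measurableSet_Ioi fun x hx => ?_
    have hx' : a < x := hx
    have h1 : (1:ℝ) ≤ (a - μ₀)⁻¹ * (x - μ₀) := by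
      rw [inv_mul_eq_div, le_div_iff₀ (by linarith)]
      linarith
    calc gpdf μ₀ σ₀ x = 1 * gpdf μ₀ σ₀ x := (one_mul _).symm
      _ ≤ (a - μ₀)⁻¹ * (x - μ₀) * gpdf μ₀ σ₀ x :=
          mul_le_mul_of_nonneg_right h1 (gpdf_nonneg _ _ _)
      _ = (a - μ₀)⁻¹ * ((x - μ₀) * gpdf μ₀ σ₀ x) := by ring
  calc ∫ x in Set.Ioi a, gaussianPDFReal μ₀ ⟨σ₀^2, sq_nonneg σ₀⟩ x
      = ∫ x in Set.Ioi a, gpdf μ₀ σ₀ x := rfl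
    _ ≤ ∫ x in Set.Ioi a, (a - μ₀)⁻¹ * ((x - μ₀) * gpdf μ₀ σ₀ x) := hmono
    _ = (a - μ₀)⁻¹ * ∫ x in Set.Ioi a, (x - μ₀) * gpdf μ₀ σ₀ x := integral_const_mul _ _
    _ = σ₀^2 / (a - μ₀) * gpdf μ₀ σ₀ a := by rw [hkey]; ring


lemma gmeas_Iic_eq_Ici (μ₀ : ℝ) {σ₀ : ℝ} (hσ₀ : 0 < σ₀) (b : ℝ) :
    gmeas μ₀ σ₀ (Set.Iic b) = gmeas μ₀ σ₀ (Set.Ici (2*μ₀ - b)) := by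
  have hmap1 : (gaussianReal μ₀ ⟨σ₀^2, sq_nonneg σ₀⟩).map ((-1 : ℝ) * ·)
      = gaussianReal (-μ₀) ⟨σ₀^2, sq_nonneg σ₀⟩ := by
    rw [gaussianReal_map_const_mul (v := ⟨σ₀^2, sq_nonneg σ₀⟩)]
    congr 1
    · ring
    · ext
      simp
      exact congrArg _ (one_mul _)
  have hmap2 : (gmeas μ₀ σ₀).map (fun x => 2*μ₀ + (-1) * x) = gmeas μ₀ σ₀ := by
    have : (fun x : ℝ => 2*μ₀ + (-1) * x) = (fun y => 2*μ₀ + y) ∘ ((-1 : ℝ) * ·) := rfl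
    rw [gmeas, this, ← Measure.map_map (by fun_prop) (by fun_prop), hmap1,
      gaussianReal_map_const_add (v := ⟨σ₀^2, sq_nonneg σ₀⟩)]
    congr 1
    ring
  have hpre : (fun x : ℝ => 2*μ₀ + (-1) * x) ⁻¹' (Set.Ici (2*μ₀ - b)) = Set.Iic b := by
    ext x
    simp only [Set.mem_preimage, Set.mem_Ici, Set.mem_Iic]
    constructor <;> intro h <;> linarith
  conv_lhs => rw [← hpre]
  rw [← Measure.map_apply (by fun_prop) measurableSet_Ici, hmap2]

lemma gmeas_singleton (μ₀ : ℝ) {σ₀ : ℝ} (hσ₀ : 0 < σ₀) (x : ℝ) :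
    gmeas μ₀ σ₀ {x} = 0 :=
  gaussianReal_absolutelyContinuous _ (gvar_ne_zero hσ₀) (measure_singleton x)

lemma gmeas_Iic_le (μ₀ : ℝ) {σ₀ : ℝ} (hσ₀ : 0 < σ₀) {a s : ℝ} (ha : μ₀ ≤ a) (hs : 0 ≤ s) :
    gmeas μ₀ σ₀ (Set.Iic a) ≤ ENNReal.ofReal (Real.exp (-(s * gpdf μ₀ σ₀ (a + s)))) := by
  have hτ : 0 ≤ s * gpdf μ₀ σ₀ (a + s) := mul_nonneg hs (gpdf_nonneg _ _ _)
  have hcompl : gmeas μ₀ σ₀ (Set.Iic a) = 1 - gmeas μ₀ σ₀ (Set.Ioi a) := by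
    rw [← prob_compl_eq_one_sub measurableSet_Ioi, Set.compl_Ioi]
  rw [hcompl]
  rw [tsub_le_iff_right]
  calc (1 : ENNReal) = ENNReal.ofReal 1 := ENNReal.ofReal_one.symm
    _ ≤ ENNReal.ofReal (Real.exp (-(s * gpdf μ₀ σ₀ (a + s))) + s * gpdf μ₀ σ₀ (a + s)) := by
        apply ENNReal.ofReal_le_ofReal
        have := Real.add_one_le_exp (-(s * gpdf μ₀ σ₀ (a + s)))
        linarith
    _ = ENNReal.ofReal (Real.exp (-(s * gpdf μ₀ σ₀ (a + s)))) +
        ENNReal.ofReal (s * gpdf μ₀ σ₀ (a + s)) := ENNReal.ofReal_add (Real.exp_pos _).le hτ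
    _ ≤ ENNReal.ofReal (Real.exp (-(s * gpdf μ₀ σ₀ (a + s)))) + gmeas μ₀ σ₀ (Set.Ioi a) := by
        gcongr
        exact (le_gmeas_Ioc μ₀ hσ₀ ha hs).trans (measure_mono Set.Ioc_subset_Ioi_self)


variable {Ω : Type*} [MeasurableSpace Ω] {P : Measure Ω} [IsProbabilityMeasure P]

lemma pair_bound (μ₀ : ℝ) {σ₀ : ℝ} (hσ₀ : 0 < σ₀) {f g : Ω → ℝ}
    (hf : Measurable f) (hg : Measurable g) (hind : IndepFun f g P)
    (hmf : P.map f = gmeas μ₀ σ₀) (hmg : P.map g = gmeas μ₀ σ₀)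
    {b Δ : ℝ} (hΔ : 0 ≤ Δ) (hb : μ₀ ≤ b - Δ) :
    P {ω | b < f ω ∧ |g ω - f ω| < Δ}
      ≤ gmeas μ₀ σ₀ (Set.Ici b) * ENNReal.ofReal (2 * Δ * gpdf μ₀ σ₀ (b - Δ)) := by
  set ν := gmeas μ₀ σ₀ with hν
  set S : Set (ℝ × ℝ) := {p | b < p.1 ∧ |p.2 - p.1| < Δ} with hS
  have hSmeas : MeasurableSet S := by
    apply MeasurableSet.inter
    · exact measurableSet_lt measurable_const measurable_fst
    · exact measurableSet_lt ((measurable_snd.sub measurable_fst).abs) measurable_const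
  have hev : {ω | b < f ω ∧ |g ω - f ω| < Δ} = (fun ω => (f ω, g ω)) ⁻¹' S := rfl
  have hmap : P.map (fun ω => (f ω, g ω)) = ν.prod ν := by
    rw [(indepFun_iff_map_prod_eq_prod_map_map hf.aemeasurable hg.aemeasurable).mp hind,
      hmf, hmg]
  rw [hev, ← Measure.map_apply (hf.prodMk hg) hSmeas, hmap, Measure.prod_apply hSmeas]
  have hbound : ∀ x : ℝ, ν (Prod.mk x ⁻¹' S)
      ≤ (Set.Ici b).indicator (fun _ => ENNReal.ofReal (2 * Δ * gpdf μ₀ σ₀ (b - Δ))) x := by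
    intro x
    by_cases hx : b < x
    · have hslice : Prod.mk x ⁻¹' S = Set.Ioo (x - Δ) (x + Δ) := by
        ext y
        simp only [hS, Set.mem_preimage, Set.mem_setOf_eq, Set.mem_Ioo, hx, true_and, abs_lt]
        constructor <;> intro h <;> constructor <;> linarith [h.1, h.2]
      rw [hslice, Set.indicator_of_mem (Set.mem_Ici.mpr hx.le)]
      calc ν (Set.Ioo (x - Δ) (x + Δ))
          ≤ ENNReal.ofReal ((x + Δ - (x - Δ)) * gpdf μ₀ σ₀ (x - Δ)) :=
            gmeas_Ioo_le μ₀ hσ₀ (by linarith)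
        _ ≤ ENNReal.ofReal (2 * Δ * gpdf μ₀ σ₀ (b - Δ)) := by
            apply ENNReal.ofReal_le_ofReal
            have h1 : x + Δ - (x - Δ) = 2 * Δ := by ring
            rw [h1]
            exact mul_le_mul_of_nonneg_left (gpdf_anti μ₀ hσ₀ hb (by linarith)) (by linarith)
    · have hslice : Prod.mk x ⁻¹' S = ∅ := by
        ext y
        simp only [hS, Set.mem_preimage, Set.mem_setOf_eq, Set.mem_empty_iff_false, iff_false]
        exact fun h => hx h.1
      rw [hslice]
      simp
  calc ∫⁻ x, ν (Prod.mk x ⁻¹' S) ∂ν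
      ≤ ∫⁻ x, (Set.Ici b).indicator
          (fun _ => ENNReal.ofReal (2 * Δ * gpdf μ₀ σ₀ (b - Δ))) x ∂ν :=
        lintegral_mono hbound
    _ = ENNReal.ofReal (2 * Δ * gpdf μ₀ σ₀ (b - Δ)) * ν (Set.Ici b) := by
        rw [lintegral_indicator measurableSet_Ici, setLIntegral_const]
    _ = ν (Set.Ici b) * ENNReal.ofReal (2 * Δ * gpdf μ₀ σ₀ (b - Δ)) := mul_comm _ _

lemma pair_eq_zero (μ₀ : ℝ) {σ₀ : ℝ} (hσ₀ : 0 < σ₀) {f g : Ω → ℝ}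
    (hf : Measurable f) (hg : Measurable g) (hind : IndepFun f g P)
    (hmf : P.map f = gmeas μ₀ σ₀) (hmg : P.map g = gmeas μ₀ σ₀) :
    P {ω | f ω = g ω} = 0 := by
  set ν := gmeas μ₀ σ₀ with hν
  set S : Set (ℝ × ℝ) := {p | p.1 = p.2} with hS
  have hSmeas : MeasurableSet S := measurableSet_eq_fun measurable_fst measurable_snd
  have hev : {ω | f ω = g ω} = (fun ω => (f ω, g ω)) ⁻¹' S := rfl
  have hmap : P.map (fun ω => (f ω, g ω)) = ν.prod ν := by
    rw [(indepFun_iff_map_prod_eq_prod_map_map hf.aemeasurable hg.aemeasurable).mp hind,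
      hmf, hmg]
  rw [hev, ← Measure.map_apply (hf.prodMk hg) hSmeas, hmap, Measure.prod_apply hSmeas]
  have : ∀ x : ℝ, ν (Prod.mk x ⁻¹' S) = 0 := by
    intro x
    have hslice : Prod.mk x ⁻¹' S = {x} := by
      ext y
      simp only [hS, Set.mem_preimage, Set.mem_setOf_eq, Set.mem_singleton_iff]
      exact eq_comm
    rw [hslice]
    exact gmeas_singleton μ₀ hσ₀ x
  simp only [this, lintegral_zero]

lemma abs_tail_bound (μ₀ : ℝ) {σ₀ : ℝ} (hσ₀ : 0 < σ₀) {f : Ω → ℝ}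
    (hf : Measurable f) (hmf : P.map f = gmeas μ₀ σ₀) (r : ℝ) :
    P {ω | r < |f ω|} ≤ gmeas μ₀ σ₀ (Set.Ici r) + gmeas μ₀ σ₀ (Set.Iic (-r)) := by
  have hsub : {ω | r < |f ω|} ⊆ f ⁻¹' (Set.Ici r ∪ Set.Iic (-r)) := by
    intro ω hω
    simp only [Set.mem_setOf_eq] at hω
    rcases lt_abs.mp hω with h | h
    · exact Or.inl (Set.mem_Ici.mpr h.le)
    · exact Or.inr (Set.mem_Iic.mpr (by linarith))
  calc P {ω | r < |f ω|} ≤ P (f ⁻¹' (Set.Ici r ∪ Set.Iic (-r))) := measure_mono hsub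
    _ = gmeas μ₀ σ₀ (Set.Ici r ∪ Set.Iic (-r)) := by
        rw [← Measure.map_apply hf (measurableSet_Ici.union measurableSet_Iic), hmf]
    _ ≤ _ := measure_union_le _ _


noncomputable def Tfun (β ℓ : ℝ) : ℝ := Real.sqrt (2*ℓ - β * Real.log ℓ)

lemma T_facts {β : ℝ} (hβ : 0 < β) : ∀ᶠ ℓ : ℝ in atTop,
    (Tfun β ℓ)^2 = 2*ℓ - β * Real.log ℓ ∧ Real.sqrt ℓ ≤ Tfun β ℓ ∧
    Tfun β ℓ ≤ Real.sqrt 2 * Real.sqrt ℓ ∧ 1 ≤ Tfun β ℓ ∧ 1 ≤ ℓ := by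
  filter_upwards [eventually_ge_atTop (max 1 ((2*β)^2))] with ℓ hℓ
  have hℓ1 : 1 ≤ ℓ := le_trans (le_max_left _ _) hℓ
  have hℓ0 : 0 < ℓ := lt_of_lt_of_le one_pos hℓ1
  have hsq : 2*β ≤ Real.sqrt ℓ := by
    rw [show (2*β) = Real.sqrt ((2*β)^2) from (Real.sqrt_sq (by positivity)).symm]
    exact Real.sqrt_le_sqrt (le_trans (le_max_right _ _) hℓ)
  have hlog : β * Real.log ℓ ≤ ℓ := by
    have h1 : Real.log ℓ = 2 * Real.log (Real.sqrt ℓ) := by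
      rw [Real.log_sqrt hℓ0.le]; ring
    have h2 : Real.log (Real.sqrt ℓ) ≤ Real.sqrt ℓ - 1 :=
      Real.log_le_sub_one_of_pos (Real.sqrt_pos.mpr hℓ0)
    have h3 : β * Real.log ℓ ≤ 2 * β * Real.sqrt ℓ := by
      rw [h1]
      nlinarith [Real.sqrt_nonneg ℓ]
    calc β * Real.log ℓ ≤ 2*β * Real.sqrt ℓ := h3
      _ ≤ Real.sqrt ℓ * Real.sqrt ℓ := mul_le_mul_of_nonneg_right hsq (Real.sqrt_nonneg _)
      _ = ℓ := Real.mul_self_sqrt hℓ0.le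
  have harg0 : 0 ≤ 2*ℓ - β * Real.log ℓ := by linarith
  have hargℓ : ℓ ≤ 2*ℓ - β * Real.log ℓ := by linarith
  have hlogpos : 0 ≤ Real.log ℓ := Real.log_nonneg hℓ1
  have hargub : 2*ℓ - β * Real.log ℓ ≤ 2*ℓ := by nlinarith
  refine ⟨Real.sq_sqrt harg0, Real.sqrt_le_sqrt hargℓ, ?_, ?_, hℓ1⟩
  · rw [← Real.sqrt_mul (by norm_num : (0:ℝ) ≤ 2)]
    exact Real.sqrt_le_sqrt hargub
  · calc (1:ℝ) = Real.sqrt 1 := Real.sqrt_one.symm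
      _ ≤ Real.sqrt ℓ := Real.sqrt_le_sqrt hℓ1
      _ ≤ Tfun β ℓ := Real.sqrt_le_sqrt hargℓ


lemma limit1 (μ₀ : ℝ) {σ₀ β : ℝ} (hσ₀ : 0 < σ₀) (hβ1 : 1 < β) :
    Tendsto (fun ℓ => Real.exp ℓ *
      (σ₀ / Tfun β ℓ * gpdf μ₀ σ₀ (μ₀ + σ₀ * Tfun β ℓ + σ₀ / Tfun β ℓ)))
      atTop atTop := by
  set c₁ : ℝ := (σ₀ * Real.sqrt (2 * Real.pi))⁻¹ with hc₁
  have hc₁pos : 0 < c₁ := by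
    rw [hc₁]
    have := Real.sqrt_pos.mpr Real.two_pi_pos
    positivity
  set C : ℝ := σ₀ * c₁ * Real.exp (-(3/2)) * (Real.sqrt 2)⁻¹ with hC
  have hCpos : 0 < C := by
    rw [hC]
    have h2 : (0:ℝ) < Real.sqrt 2 := Real.sqrt_pos.mpr (by norm_num)
    positivity
  have hW : Tendsto (fun ℓ : ℝ => C * ℓ ^ ((β-1)/2)) atTop atTop := by
    apply Tendsto.const_mul_atTop hCpos
    exact tendsto_rpow_atTop (by linarith)
  apply tendsto_atTop_mono' atTop ?_ hW
  filter_upwards [T_facts (by linarith : (0:ℝ) < β)] with ℓ hfacts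
  obtain ⟨hT2, hTlb, hTub, hT1, hℓ1⟩ := hfacts
  set T := Tfun β ℓ with hT
  have hℓ0 : 0 < ℓ := lt_of_lt_of_le one_pos hℓ1
  have hT0 : 0 < T := lt_of_lt_of_le one_pos hT1
  have harg : μ₀ + σ₀ * T + σ₀ / T = μ₀ + σ₀ * (T + T⁻¹) := by
    field_simp
    ring
  rw [harg, gpdf_affine μ₀ hσ₀, ← hc₁]
  have hexp : c₁ * Real.exp (-(T + T⁻¹)^2 / 2) * Real.exp ℓ
      = c₁ * Real.exp (ℓ - (T + T⁻¹)^2/2) := by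
    rw [mul_assoc, ← Real.exp_add]
    congr 2
    ring
  have hTsq : (T + T⁻¹)^2 = T^2 + 2 + T⁻¹^2 := by
    field_simp
    ring
  have hexparg : ℓ - (T + T⁻¹)^2/2 = β/2 * Real.log ℓ - 1 - T⁻¹^2/2 := by
    rw [hTsq, hT2]
    ring
  have hTinv2 : T⁻¹^2 ≤ 1 := by
    rw [← one_pow 2]
    apply pow_le_pow_left₀ (by positivity)
    rw [inv_le_one_iff₀]
    right; exact hT1
  have hexplb : Real.exp (ℓ - (T + T⁻¹)^2/2) ≥ ℓ ^ (β/2) * Real.exp (-(3/2)) := by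
    rw [hexparg]
    have h1 : β/2 * Real.log ℓ - 1 - T⁻¹^2/2 ≥ β/2 * Real.log ℓ + (-(3/2)) := by
      linarith
    calc ℓ ^ (β/2) * Real.exp (-(3/2))
        = Real.exp (β/2 * Real.log ℓ) * Real.exp (-(3/2)) := by
          rw [Real.rpow_def_of_pos hℓ0, mul_comm (Real.log ℓ) (β/2)]
      _ = Real.exp (β/2 * Real.log ℓ + (-(3/2))) := (Real.exp_add _ _).symm
      _ ≤ Real.exp (β/2 * Real.log ℓ - 1 - T⁻¹^2/2) := Real.exp_le_exp.mpr h1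
  have hTinvlb : (Real.sqrt 2)⁻¹ * ℓ ^ (-(1/2) : ℝ) ≤ T⁻¹ := by
    have h1 : T ≤ Real.sqrt 2 * Real.sqrt ℓ := hTub
    have hs2 : (0:ℝ) < Real.sqrt 2 := Real.sqrt_pos.mpr (by norm_num)
    have hsl : (0:ℝ) < Real.sqrt ℓ := Real.sqrt_pos.mpr hℓ0
    have h2 : (Real.sqrt 2 * Real.sqrt ℓ)⁻¹ ≤ T⁻¹ := by
      apply inv_anti₀ hT0 h1
    calc (Real.sqrt 2)⁻¹ * ℓ ^ (-(1/2) : ℝ)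
        = (Real.sqrt 2 * Real.sqrt ℓ)⁻¹ := by
          rw [mul_inv]
          congr 1
          rw [Real.sqrt_eq_rpow, Real.rpow_neg hℓ0.le]
      _ ≤ T⁻¹ := h2
  calc C * ℓ ^ ((β-1)/2)
      = σ₀ * c₁ * Real.exp (-(3/2)) * (Real.sqrt 2)⁻¹ * (ℓ ^ (β/2) * ℓ ^ (-(1/2):ℝ)) := by
        rw [hC, ← Real.rpow_add hℓ0]
        congr 2
        ring
    _ = σ₀ * ((Real.sqrt 2)⁻¹ * ℓ ^ (-(1/2):ℝ)) * (ℓ ^ (β/2) * Real.exp (-(3/2)) * c₁) := by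
        ring
    _ ≤ σ₀ * T⁻¹ * (Real.exp (ℓ - (T + T⁻¹)^2/2) * c₁) := by
        have hx : (0:ℝ) ≤ σ₀ := hσ₀.le
        apply mul_le_mul
        · exact mul_le_mul_of_nonneg_left hTinvlb hx
        · exact mul_le_mul_of_nonneg_right hexplb hc₁pos.le
        · positivity
        · positivity
    _ = Real.exp ℓ * (σ₀ / T * (c₁ * Real.exp (-(T + T⁻¹)^2 / 2))) := by
        rw [show ℓ - (T + T⁻¹)^2/2 = ℓ + -(T+T⁻¹)^2/2 from by ring, Real.exp_add,
          div_eq_mul_inv]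
        ring


lemma limit2 (μ₀ : ℝ) {σ₀ η β : ℝ} (hσ₀ : 0 < σ₀) (hη : 1/2 < η) (hβ0 : 0 < β)
    (hβ2 : β < η + 1/2) :
    Tendsto (fun ℓ : ℝ => Real.exp ℓ ^ 2 *
      (2 * ℓ ^ (-η) * gpdf μ₀ σ₀ (μ₀ + σ₀ * Tfun β ℓ - 2 * ℓ ^ (-η))) *
      (σ₀^2 / (σ₀ * Tfun β ℓ - ℓ ^ (-η)) *
        gpdf μ₀ σ₀ (μ₀ + σ₀ * Tfun β ℓ - ℓ ^ (-η)))) atTop (nhds 0) := by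
  set c₁ : ℝ := (σ₀ * Real.sqrt (2 * Real.pi))⁻¹ with hc₁
  have hc₁pos : 0 < c₁ := by
    rw [hc₁]
    have := Real.sqrt_pos.mpr Real.two_pi_pos
    positivity
  set C : ℝ := 2 * c₁^2 * (2 * σ₀ * (Real.exp 1 * 1)) with hC
  have hη0 : 0 < η := by linarith
  -- eventual facts
  have hTD0 : Tendsto (fun ℓ : ℝ => Real.sqrt 2 * ℓ ^ ((1:ℝ)/2 - η)) atTop (nhds 0) := by
    have h := tendsto_rpow_neg_atTop (y := η - 1/2) (by linarith)
    simp only [show (1:ℝ)/2 - η = -(η - 1/2) from by ring]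
    simpa using h.const_mul (Real.sqrt 2)
  have hsmall : ∀ᶠ ℓ : ℝ in atTop, Real.sqrt 2 * ℓ ^ ((1:ℝ)/2 - η) < σ₀ / 3 :=
    hTD0.eventually_lt_const (by positivity)
  have hsqrt_big : ∀ᶠ ℓ : ℝ in atTop, 2 / σ₀ ≤ Real.sqrt ℓ := by
    filter_upwards [eventually_ge_atTop (max 1 ((2/σ₀)^2))] with ℓ hℓ
    rw [show (2/σ₀) = Real.sqrt ((2/σ₀)^2) from (Real.sqrt_sq (by positivity)).symm]
    exact Real.sqrt_le_sqrt (le_trans (le_max_right _ _) hℓ)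
  apply squeeze_zero' ?_ ?_ (show Tendsto (fun ℓ : ℝ => C * ℓ ^ (β - η - 1/2)) atTop (nhds 0)
    from by
      have h := tendsto_rpow_neg_atTop (y := η + 1/2 - β) (by linarith)
      simp only [show β - η - 1/2 = -(η + 1/2 - β) from by ring]
      simpa using h.const_mul C)
  · -- nonnegativity
    filter_upwards [T_facts hβ0, hsmall, hsqrt_big] with ℓ hfacts hsm hsb
    obtain ⟨hT2, hTlb, hTub, hT1, hℓ1⟩ := hfacts
    have hℓ0 : 0 < ℓ := lt_of_lt_of_le one_pos hℓ1
    have hD0 : (0:ℝ) ≤ ℓ ^ (-η) := Real.rpow_nonneg hℓ0.le _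
    have hD1 : ℓ ^ (-η) ≤ 1 := Real.rpow_le_one_of_one_le_of_nonpos hℓ1 (by linarith)
    have hden : 0 < σ₀ * Tfun β ℓ - ℓ ^ (-η) := by
      have h1 : 2/σ₀ ≤ Tfun β ℓ := le_trans hsb hTlb
      have h2 : 2 ≤ σ₀ * Tfun β ℓ := by
        rw [div_le_iff₀ hσ₀] at h1
        linarith [mul_comm σ₀ (Tfun β ℓ)]
      linarith
    have g1 := gpdf_nonneg μ₀ σ₀ (μ₀ + σ₀ * Tfun β ℓ - 2 * ℓ ^ (-η))
    have g2 := gpdf_nonneg μ₀ σ₀ (μ₀ + σ₀ * Tfun β ℓ - ℓ ^ (-η))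
    have e2 : (0:ℝ) ≤ Real.exp ℓ ^ 2 := sq_nonneg _
    have hd : (0:ℝ) ≤ σ₀^2 / (σ₀ * Tfun β ℓ - ℓ ^ (-η)) := by positivity
    positivity
  · -- upper bound
    filter_upwards [T_facts hβ0, hsmall, hsqrt_big] with ℓ hfacts hsm hsb
    obtain ⟨hT2, hTlb, hTub, hT1, hℓ1⟩ := hfacts
    set T := Tfun β ℓ with hT
    set D : ℝ := ℓ ^ (-η) with hD
    have hℓ0 : 0 < ℓ := lt_of_lt_of_le one_pos hℓ1
    have hT0 : 0 < T := lt_of_lt_of_le one_pos hT1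
    have hD0 : (0:ℝ) ≤ D := Real.rpow_nonneg hℓ0.le _
    have hD1 : D ≤ 1 := Real.rpow_le_one_of_one_le_of_nonpos hℓ1 (by linarith)
    have hsl : (0:ℝ) < Real.sqrt ℓ := Real.sqrt_pos.mpr hℓ0
    -- T * D is small
    have hTD : T * D * (3 / σ₀) ≤ 1 := by
      have h1 : T * D ≤ Real.sqrt 2 * Real.sqrt ℓ * D :=
        mul_le_mul_of_nonneg_right hTub hD0
      have h2 : Real.sqrt 2 * Real.sqrt ℓ * D = Real.sqrt 2 * ℓ ^ ((1:ℝ)/2 - η) := by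
        rw [hD, Real.sqrt_eq_rpow ℓ, mul_assoc, ← Real.rpow_add hℓ0,
          show (1:ℝ)/2 + -η = 1/2 - η from by ring]
      have h3 : T * D ≤ σ₀ / 3 := by
        rw [← h2] at hsm
        linarith
      rw [div_eq_mul_inv]
      calc T * D * (3 * σ₀⁻¹) ≤ (σ₀/3) * (3 * σ₀⁻¹) := by
            apply mul_le_mul_of_nonneg_right h3
            positivity
        _ = 1 := by field_simp
    have hden : σ₀ * Real.sqrt ℓ / 2 ≤ σ₀ * T - D := by
      have h1 : 2/σ₀ ≤ Real.sqrt ℓ := hsb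
      have h2 : 2 ≤ σ₀ * Real.sqrt ℓ := by
        rw [div_le_iff₀ hσ₀] at h1
        linarith [mul_comm σ₀ (Real.sqrt ℓ)]
      have h3 : σ₀ * Real.sqrt ℓ ≤ σ₀ * T := mul_le_mul_of_nonneg_left hTlb hσ₀.le
      linarith
    have hdenpos : 0 < σ₀ * T - D := lt_of_lt_of_le (by positivity) hden
    -- rewrite the gpdf values
    have harg1 : μ₀ + σ₀ * T - 2 * D = μ₀ + σ₀ * (T - 2*D/σ₀) := by field_simp; ring
    have harg2 : μ₀ + σ₀ * T - D = μ₀ + σ₀ * (T - D/σ₀) := by field_simp; ring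
    rw [harg1, harg2, gpdf_affine μ₀ hσ₀, gpdf_affine μ₀ hσ₀, ← hc₁]
    -- exponential bound
    have hexp : Real.exp ℓ ^ 2 * (Real.exp (-(T - 2*D/σ₀)^2/2) *
        Real.exp (-(T - D/σ₀)^2/2)) ≤ Real.exp 1 * ℓ ^ β := by
      have h1 : Real.exp ℓ ^ 2 = Real.exp (ℓ + ℓ) := by
        rw [Real.exp_add]; ring
      rw [h1, ← Real.exp_add, ← Real.exp_add]
      have harg : ℓ + ℓ + (-(T - 2*D/σ₀)^2/2 + -(T - D/σ₀)^2/2)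
          ≤ 1 + β * Real.log ℓ := by
        have hTsq : (T - 2*D/σ₀)^2/2 + (T - D/σ₀)^2/2
            = T^2 - 3*T*D/σ₀ + 5*D^2/(2*σ₀^2) := by
          field_simp
          ring
        have h5 : 0 ≤ 5*D^2/(2*σ₀^2) := by positivity
        have h6 : 3*T*D/σ₀ ≤ 1 := by
          calc 3*T*D/σ₀ = T * D * (3/σ₀) := by ring
            _ ≤ 1 := hTD
        nlinarith [hT2]
      calc Real.exp (ℓ + ℓ + (-(T - 2*D/σ₀)^2/2 + -(T - D/σ₀)^2/2))
          ≤ Real.exp (1 + β * Real.log ℓ) := Real.exp_le_exp.mpr harg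
        _ = Real.exp 1 * ℓ ^ β := by
            rw [Real.exp_add, Real.rpow_def_of_pos hℓ0, mul_comm (Real.log ℓ) β]
    have hdeninv : σ₀^2 / (σ₀ * T - D) ≤ 2 * σ₀ * ℓ ^ (-(1:ℝ)/2) := by
      have h1 : σ₀^2 / (σ₀ * T - D) ≤ σ₀^2 / (σ₀ * Real.sqrt ℓ / 2) :=
        div_le_div_of_nonneg_left (by positivity) (by positivity) hden
      have h2 : σ₀^2 / (σ₀ * Real.sqrt ℓ / 2) = 2 * σ₀ * (Real.sqrt ℓ)⁻¹ := by
        field_simp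
      have h3 : (Real.sqrt ℓ)⁻¹ = ℓ ^ (-(1:ℝ)/2) := by
        rw [Real.sqrt_eq_rpow ℓ, ← Real.rpow_neg hℓ0.le]
        norm_num
      calc σ₀^2 / (σ₀ * T - D) ≤ σ₀^2 / (σ₀ * Real.sqrt ℓ / 2) := h1
        _ = 2 * σ₀ * (Real.sqrt ℓ)⁻¹ := h2
        _ = 2 * σ₀ * ℓ ^ (-(1:ℝ)/2) := by rw [h3]
    calc Real.exp ℓ ^ 2 * (2 * D * (c₁ * Real.exp (-(T - 2*D/σ₀)^2/2))) *
          (σ₀^2 / (σ₀ * T - D) * (c₁ * Real.exp (-(T - D/σ₀)^2/2)))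
        = 2 * c₁^2 * (D * ((σ₀^2 / (σ₀ * T - D)) *
            (Real.exp ℓ ^ 2 * (Real.exp (-(T - 2*D/σ₀)^2/2) *
              Real.exp (-(T - D/σ₀)^2/2))))) := by ring
      _ ≤ 2 * c₁^2 * (D * ((2 * σ₀ * ℓ ^ (-(1:ℝ)/2)) * (Real.exp 1 * ℓ ^ β))) := by
          have e2 : (0:ℝ) ≤ Real.exp ℓ ^ 2 := sq_nonneg _
          gcongr <;> positivity
      _ = C * ℓ ^ (β - η - 1/2) := by
          have hcomb : ℓ ^ (-η) * ℓ ^ (-(1:ℝ)/2) * ℓ ^ β = ℓ ^ (β - η - 1/2) := by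
            rw [← Real.rpow_add hℓ0, ← Real.rpow_add hℓ0]
            congr 1
            ring
          rw [hC, hD, ← hcomb]
          ring

lemma limit3 (μ₀ : ℝ) {σ₀ η : ℝ} (hσ₀ : 0 < σ₀) (hη : 1/2 < η) :
    Tendsto (fun ℓ : ℝ => Real.exp ℓ *
      (σ₀^2 / (ℓ ^ η - μ₀) * gpdf μ₀ σ₀ (ℓ ^ η) +
       σ₀^2 / (μ₀ + ℓ ^ η) * gpdf μ₀ σ₀ (2*μ₀ + ℓ ^ η))) atTop (nhds 0) := by
  have hη0 : 0 < η := by linarith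
  set c₀ : ℝ := (Real.sqrt (2 * Real.pi * σ₀^2))⁻¹ with hc₀
  have hc₀pos : 0 < c₀ := by
    rw [hc₀]
    have : (0:ℝ) < 2 * Real.pi * σ₀^2 := by positivity
    positivity
  have hR : Tendsto (fun ℓ : ℝ => ℓ ^ η) atTop atTop := tendsto_rpow_atTop hη0
  have hR2 : Tendsto (fun ℓ : ℝ => ℓ ^ (2*η - 1)) atTop atTop :=
    tendsto_rpow_atTop (by linarith)
  apply squeeze_zero' ?_ ?_ (show Tendsto (fun ℓ : ℝ => 2 * σ₀^2 * c₀ * Real.exp (-ℓ))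
      atTop (nhds 0) from by
    simpa using (Real.tendsto_exp_atBot.comp tendsto_neg_atTop_atBot).const_mul (2 * σ₀^2 * c₀))
  · -- nonneg
    filter_upwards [hR.eventually_ge_atTop (2 * |μ₀| + 1), eventually_ge_atTop (1:ℝ)]
      with ℓ hRb hℓ1
    have h1 : (0:ℝ) < ℓ ^ η - μ₀ := by
      have := abs_le.mp (le_refl |μ₀|)
      have h2 : μ₀ ≤ |μ₀| := le_abs_self μ₀
      nlinarith [abs_nonneg μ₀]
    have h2 : (0:ℝ) < μ₀ + ℓ ^ η := by
      have h2 : -μ₀ ≤ |μ₀| := neg_le_abs μ₀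
      nlinarith [abs_nonneg μ₀]
    have g1 := gpdf_nonneg μ₀ σ₀ (ℓ ^ η)
    have g2 := gpdf_nonneg μ₀ σ₀ (2*μ₀ + ℓ ^ η)
    positivity
  · -- upper
    filter_upwards [hR.eventually_ge_atTop (2 * |μ₀| + 1), eventually_ge_atTop (1:ℝ),
      hR2.eventually_ge_atTop (16 * σ₀^2)] with ℓ hRb hℓ1 hR2b
    have hℓ0 : (0:ℝ) < ℓ := lt_of_lt_of_le one_pos hℓ1
    set R : ℝ := ℓ ^ η with hRdef
    have habs : |μ₀| ≥ μ₀ := le_abs_self μ₀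
    have habs2 : |μ₀| ≥ -μ₀ := neg_le_abs μ₀
    have habs0 : |μ₀| ≥ 0 := abs_nonneg μ₀
    have hR0 : (0:ℝ) < R := by nlinarith
    have hd1 : (1:ℝ) ≤ R - μ₀ := by nlinarith
    have hd2 : (1:ℝ) ≤ μ₀ + R := by nlinarith
    have hf1 : σ₀^2 / (R - μ₀) ≤ σ₀^2 := by
      rw [div_le_iff₀ (by linarith)]
      nlinarith [sq_nonneg σ₀]
    have hf2 : σ₀^2 / (μ₀ + R) ≤ σ₀^2 := by
      rw [div_le_iff₀ (by linarith)]
      nlinarith [sq_nonneg σ₀]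
    have hRsq : 16 * σ₀^2 * ℓ ≤ R^2 := by
      have h1 : R^2 = ℓ ^ (2*η) := by
        rw [hRdef, sq, ← Real.rpow_add hℓ0]
        congr 1
        ring
      have h1b := Real.rpow_add hℓ0 (2*η-1) 1
      rw [Real.rpow_one] at h1b
      rw [show 2*η - 1 + 1 = 2*η from by ring] at h1b
      rw [h1, h1b]
      exact mul_le_mul_of_nonneg_right hR2b hℓ0.le
    have hhalf : R/2 ≤ R - μ₀ ∧ R/2 ≤ μ₀ + R := by
      constructor <;> nlinarith
    have hg1 : gpdf μ₀ σ₀ R ≤ c₀ * Real.exp (-(2*ℓ)) := by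
      rw [gpdf_def, ← hc₀]
      apply mul_le_mul_of_nonneg_left _ hc₀pos.le
      apply Real.exp_le_exp.mpr
      rw [div_le_iff₀ (by positivity)]
      nlinarith [hhalf.1, hRsq, sq_nonneg (R - μ₀)]
    have hg2 : gpdf μ₀ σ₀ (2*μ₀ + R) ≤ c₀ * Real.exp (-(2*ℓ)) := by
      rw [gpdf_def, ← hc₀]
      apply mul_le_mul_of_nonneg_left _ hc₀pos.le
      apply Real.exp_le_exp.mpr
      rw [div_le_iff₀ (by positivity)]
      have harg : 2*μ₀ + R - μ₀ = μ₀ + R := by ring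
      rw [harg]
      nlinarith [hhalf.2, hRsq, sq_nonneg (μ₀ + R)]
    have hterm1 : σ₀^2 / (R - μ₀) * gpdf μ₀ σ₀ R ≤ σ₀^2 * (c₀ * Real.exp (-(2*ℓ))) :=
      mul_le_mul hf1 hg1 (gpdf_nonneg _ _ _) (sq_nonneg σ₀)
    have hterm2 : σ₀^2 / (μ₀ + R) * gpdf μ₀ σ₀ (2*μ₀ + R)
        ≤ σ₀^2 * (c₀ * Real.exp (-(2*ℓ))) :=
      mul_le_mul hf2 hg2 (gpdf_nonneg _ _ _) (sq_nonneg σ₀)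
    have hee : Real.exp ℓ * Real.exp (-(2*ℓ)) = Real.exp (-ℓ) := by
      rw [← Real.exp_add]
      congr 1
      ring
    calc Real.exp ℓ * (σ₀^2 / (R - μ₀) * gpdf μ₀ σ₀ R +
          σ₀^2 / (μ₀ + R) * gpdf μ₀ σ₀ (2*μ₀ + R))
        ≤ Real.exp ℓ * (σ₀^2 * (c₀ * Real.exp (-(2*ℓ))) +
          σ₀^2 * (c₀ * Real.exp (-(2*ℓ)))) := by
          exact mul_le_mul_of_nonneg_left (add_le_add hterm1 hterm2) (Real.exp_pos _).le
      _ = 2 * σ₀^2 * c₀ * Real.exp (-ℓ) := by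
          rw [← hee]
          ring

end Stmt5Aux

open Stmt5Aux in

theorem stmt_5 {Ω : Type*} [MeasurableSpace Ω] (P : Measure Ω) [IsProbabilityMeasure P]
    (μ₀ σ₀ η : ℝ) (hσ₀ : 0 < σ₀) (hη : 1 / 2 < η)
    (X : ℕ → Ω → ℝ) (hmeas : ∀ k, Measurable (X k))
    (hindep : iIndepFun X P)
    (hdist : ∀ k, Measure.map (X k) P = gaussianReal μ₀ ⟨σ₀ ^ 2, sq_nonneg σ₀⟩)
    (μstar : ℕ → Ω → ℝ)
    (hμstar : ∀ (K : ℕ) (hK : K ≠ 0) (ω : Ω),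
      μstar K ω = (Finset.range K).sup' (Finset.nonempty_range_iff.mpr hK) (fun k => X k ω))
    (J : ℕ → Ω → ℕ)
    (hJ : ∀ K ω, J K ω = ((Finset.range K).filter (fun k => X k ω < μstar K ω)).card)
    (Δ : ℕ → ℝ) (hΔ : ∀ K, Δ K = (Real.log K) ^ (-η)) :
    Tendsto (fun K : ℕ =>
        P {ω | (∀ k < K, X k ω < μstar K ω → X k ω ≤ μstar K ω - Δ K) ∧
               (∀ k < K, |X k ω| ≤ (Δ K)⁻¹) ∧
               Δ K * K ≤ (J K ω : ℝ)})
      atTop (nhds 1) := by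
  classical
  have hη0 : 0 < η := by linarith
  set β : ℝ := 3/4 + η/2 with hβ
  have hβ0 : 0 < β := by rw [hβ]; linarith
  have hβ1 : 1 < β := by rw [hβ]; linarith
  have hβ2 : β < η + 1/2 := by rw [hβ]; linarith
  have hν : ∀ k, P.map (X k) = gmeas μ₀ σ₀ := fun k => (hdist k).trans rfl
  set L : ℕ → ℝ := fun K => Real.log K with hL
  set tt : ℕ → ℝ := fun K => Tfun β (L K) with htt
  set aa : ℕ → ℝ := fun K => μ₀ + σ₀ * tt K with haa
  set prs : ℕ → Finset (ℕ × ℕ) :=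
    fun K => (Finset.range K ×ˢ Finset.range K).filter (fun p => p.1 ≠ p.2) with hprs
  set bad : ℕ → Set Ω := fun K =>
    (⋂ k ∈ Finset.range K, {ω | X k ω ≤ aa K}) ∪
    ((⋃ p ∈ prs K, {ω | aa K - Δ K < X p.1 ω ∧ |X p.2 ω - X p.1 ω| < Δ K}) ∪
    ((⋃ k ∈ Finset.range K, {ω | (Δ K)⁻¹ < |X k ω|}) ∪
    (⋃ p ∈ prs K, {ω | X p.1 ω = X p.2 ω}))) with hbad
  have hmbad : ∀ K, MeasurableSet (bad K) := by
    intro K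
    rw [hbad]
    apply MeasurableSet.union
    · exact Finset.measurableSet_biInter _
        fun k _ => measurableSet_le (hmeas k) measurable_const
    apply MeasurableSet.union
    · exact Finset.measurableSet_biUnion _
        fun p _ => (measurableSet_lt measurable_const (hmeas p.1)).inter
          (measurableSet_lt ((hmeas p.2).sub (hmeas p.1)).abs measurable_const)
    apply MeasurableSet.union
    · exact Finset.measurableSet_biUnion _
        fun k _ => measurableSet_lt measurable_const (hmeas k).abs
    · exact Finset.measurableSet_biUnion _
        fun p _ => measurableSet_eq_fun (hmeas p.1) (hmeas p.2)
  -- pair membership helper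
  have hprsmem : ∀ K (i j : ℕ), i < K → j < K → i ≠ j → (i, j) ∈ prs K := by
    intro K i j hi hj hij
    rw [hprs]
    simp only [Finset.mem_filter, Finset.mem_product, Finset.mem_range]
    exact ⟨⟨hi, hj⟩, hij⟩
  -- STEP A : inclusion
  have hincl : ∀ K : ℕ, K ≠ 0 → 0 < Δ K → Δ K * K ≤ (K:ℝ) - 1 →
      (bad K)ᶜ ⊆ {ω | (∀ k < K, X k ω < μstar K ω → X k ω ≤ μstar K ω - Δ K) ∧
               (∀ k < K, |X k ω| ≤ (Δ K)⁻¹) ∧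
               Δ K * K ≤ (J K ω : ℝ)} := by
    intro K hK0 hΔp hΔK1 ω hω
    rw [hbad] at hω
    simp only [Set.mem_compl_iff, Set.mem_union, not_or] at hω
    obtain ⟨hA, hB, hC, hD⟩ := hω
    have hB' : ∀ p ∈ prs K, ¬(aa K - Δ K < X p.1 ω ∧ |X p.2 ω - X p.1 ω| < Δ K) :=
      fun p hp hcon => hB (Set.mem_biUnion hp hcon)
    have hC' : ∀ k ∈ Finset.range K, ¬((Δ K)⁻¹ < |X k ω|) :=
      fun k hk hcon => hC (Set.mem_biUnion hk hcon)
    have hD' : ∀ p ∈ prs K, ¬(X p.1 ω = X p.2 ω) :=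
      fun p hp hcon => hD (Set.mem_biUnion hp hcon)
    have hA' : ∃ m ∈ Finset.range K, aa K < X m ω := by
      by_contra hcon
      push_neg at hcon
      exact hA (Set.mem_iInter₂.mpr fun k hk => (hcon k hk : X k ω ≤ aa K))
    have hne : (Finset.range K).Nonempty := Finset.nonempty_range_iff.mpr hK0
    obtain ⟨j₀, hj₀mem, hj₀⟩ := Finset.exists_mem_eq_sup' hne (fun k => X k ω)
    have hM : μstar K ω = X j₀ ω := by rw [hμstar K hK0 ω, hj₀]
    have hub : ∀ k ∈ Finset.range K, X k ω ≤ μstar K ω := by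
      intro k hk
      rw [hμstar K hK0 ω]
      exact Finset.le_sup' (fun k => X k ω) hk
    obtain ⟨m, hmmem, hm⟩ := hA'
    have haM : aa K < μstar K ω := lt_of_lt_of_le hm (hub m hmmem)
    refine ⟨?_, ?_, ?_⟩
    · intro k hk hlt
      by_contra hcon
      push_neg at hcon
      have hkj : k ≠ j₀ := by
        intro h
        rw [h, ← hM] at hlt
        exact lt_irrefl _ hlt
      have hj₀K : j₀ < K := Finset.mem_range.mp hj₀mem
      apply hB' (k, j₀) (hprsmem K k j₀ hk hj₀K hkj)
      constructor
      · simp only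
        linarith
      · simp only
        have heq : X j₀ ω - X k ω = μstar K ω - X k ω := by rw [hM]
        rw [heq, abs_of_pos (by linarith)]
        linarith
    · intro k hk
      exact not_lt.mp (hC' k (Finset.mem_range.mpr hk))
    · rw [hJ K ω]
      have hfilter : (Finset.range K).filter (fun k => X k ω < μstar K ω)
          = (Finset.range K).erase j₀ := by
        ext k
        simp only [Finset.mem_filter, Finset.mem_erase]
        constructor
        · rintro ⟨hkr, hklt⟩
          refine ⟨?_, hkr⟩
          intro hkj
          rw [hkj, ← hM] at hklt
          exact lt_irrefl _ hklt
        · rintro ⟨hkj, hkr⟩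
          refine ⟨hkr, ?_⟩
          have hle := hub k hkr
          have hneq : X k ω ≠ X j₀ ω :=
            hD' (k, j₀) (hprsmem K k j₀ (Finset.mem_range.mp hkr)
              (Finset.mem_range.mp hj₀mem) hkj)
          rw [hM]
          exact lt_of_le_of_ne (hM ▸ hle) hneq
      rw [hfilter, Finset.card_erase_of_mem hj₀mem, Finset.card_range,
        Nat.cast_sub (Nat.one_le_iff_ne_zero.mpr hK0)]
      simpa using hΔK1
  -- STEP B : measure bounds
  set g1 : ℕ → ℝ := fun K =>
    Real.exp (-((K:ℝ) * (σ₀ / tt K * gpdf μ₀ σ₀ (aa K + σ₀ / tt K)))) with hg1def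
  set g2 : ℕ → ℝ := fun K =>
    (K:ℝ)^2 * (2 * Δ K * gpdf μ₀ σ₀ (aa K - 2 * Δ K)) *
      (σ₀^2 / (σ₀ * tt K - Δ K) * gpdf μ₀ σ₀ (aa K - Δ K)) with hg2def
  set g3 : ℕ → ℝ := fun K =>
    (K:ℝ) * (σ₀^2 / ((Δ K)⁻¹ - μ₀) * gpdf μ₀ σ₀ ((Δ K)⁻¹) +
      σ₀^2 / (μ₀ + (Δ K)⁻¹) * gpdf μ₀ σ₀ (2*μ₀ + (Δ K)⁻¹)) with hg3def
  have hbound : ∀ K : ℕ, 1 ≤ tt K → 0 < Δ K → 2 * Δ K ≤ σ₀ * tt K → |μ₀| < (Δ K)⁻¹ →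
      P (bad K) ≤ ENNReal.ofReal (g1 K) +
        (ENNReal.ofReal (g2 K) + ENNReal.ofReal (g3 K)) := by
    intro K ht1 hΔp hSC2 hSC4
    have htpos : 0 < tt K := lt_of_lt_of_le one_pos ht1
    -- E1
    have hE1 : P (⋂ k ∈ Finset.range K, {ω | X k ω ≤ aa K}) ≤ ENNReal.ofReal (g1 K) := by
      have hsets : ∀ k, {ω | X k ω ≤ aa K} = X k ⁻¹' (Set.Iic (aa K)) := fun k => rfl
      have hprod : P (⋂ k ∈ Finset.range K, {ω | X k ω ≤ aa K})
          = ∏ k ∈ Finset.range K, P (X k ⁻¹' (Set.Iic (aa K))) := by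
        simp_rw [hsets]
        exact hindep.meas_biInter fun k _ => ⟨Set.Iic (aa K), measurableSet_Iic, rfl⟩
      have heach : ∀ k, P (X k ⁻¹' (Set.Iic (aa K))) = gmeas μ₀ σ₀ (Set.Iic (aa K)) := by
        intro k
        rw [← Measure.map_apply (hmeas k) measurableSet_Iic, hν k]
      have hIic : gmeas μ₀ σ₀ (Set.Iic (aa K)) ≤
          ENNReal.ofReal (Real.exp (-(σ₀ / tt K * gpdf μ₀ σ₀ (aa K + σ₀ / tt K)))) := by
        apply gmeas_Iic_le μ₀ hσ₀
        · rw [haa]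
          simp only
          nlinarith
        · positivity
      calc P (⋂ k ∈ Finset.range K, {ω | X k ω ≤ aa K})
          = ∏ k ∈ Finset.range K, P (X k ⁻¹' (Set.Iic (aa K))) := hprod
        _ ≤ ∏ _k ∈ Finset.range K, ENNReal.ofReal
              (Real.exp (-(σ₀ / tt K * gpdf μ₀ σ₀ (aa K + σ₀ / tt K)))) :=
            Finset.prod_le_prod' fun k _ => (heach k) ▸ hIic
        _ = ENNReal.ofReal (Real.exp (-(σ₀ / tt K * gpdf μ₀ σ₀ (aa K + σ₀ / tt K)))) ^ K := by
            rw [Finset.prod_const, Finset.card_range]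
        _ = ENNReal.ofReal (g1 K) := by
            rw [← ENNReal.ofReal_pow (Real.exp_pos _).le, ← Real.exp_nat_mul, hg1def]
            simp only
            congr 1
            ring
    -- E2
    have hE2 : P (⋃ p ∈ prs K, {ω | aa K - Δ K < X p.1 ω ∧ |X p.2 ω - X p.1 ω| < Δ K})
        ≤ ENNReal.ofReal (g2 K) := by
      set m : ℝ := (σ₀^2 / (aa K - Δ K - μ₀) * gpdf μ₀ σ₀ (aa K - Δ K)) *
        (2 * Δ K * gpdf μ₀ σ₀ (aa K - Δ K - Δ K)) with hm
      have hmnonneg : 0 ≤ σ₀^2 / (aa K - Δ K - μ₀) * gpdf μ₀ σ₀ (aa K - Δ K) := by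
        have hd : 0 < aa K - Δ K - μ₀ := by
          rw [haa]
          simp only
          linarith
        have := gpdf_nonneg μ₀ σ₀ (aa K - Δ K)
        positivity
      have heachp : ∀ p ∈ prs K,
          P {ω | aa K - Δ K < X p.1 ω ∧ |X p.2 ω - X p.1 ω| < Δ K}
            ≤ ENNReal.ofReal m := by
        intro p hp
        have hij : p.1 ≠ p.2 := by
          rw [hprs] at hp
          exact (Finset.mem_filter.mp hp).2
        have hb2 : μ₀ ≤ aa K - Δ K - Δ K := by
          rw [haa]
          simp only
          linarith
        have hblt : μ₀ < aa K - Δ K := by linarith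
        calc P {ω | aa K - Δ K < X p.1 ω ∧ |X p.2 ω - X p.1 ω| < Δ K}
            ≤ gmeas μ₀ σ₀ (Set.Ici (aa K - Δ K)) *
              ENNReal.ofReal (2 * Δ K * gpdf μ₀ σ₀ (aa K - Δ K - Δ K)) :=
              pair_bound μ₀ hσ₀ (hmeas p.1) (hmeas p.2) (hindep.indepFun hij)
                (hν p.1) (hν p.2) hΔp.le hb2
          _ ≤ ENNReal.ofReal (σ₀^2 / (aa K - Δ K - μ₀) * gpdf μ₀ σ₀ (aa K - Δ K)) *
              ENNReal.ofReal (2 * Δ K * gpdf μ₀ σ₀ (aa K - Δ K - Δ K)) :=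
              mul_le_mul_left (gmeas_Ici_le μ₀ hσ₀ hblt) _
          _ = ENNReal.ofReal m := by
              rw [hm, ENNReal.ofReal_mul hmnonneg]
      calc P (⋃ p ∈ prs K, {ω | aa K - Δ K < X p.1 ω ∧ |X p.2 ω - X p.1 ω| < Δ K})
          ≤ ∑ p ∈ prs K, P {ω | aa K - Δ K < X p.1 ω ∧ |X p.2 ω - X p.1 ω| < Δ K} :=
            measure_biUnion_finset_le _ _
        _ ≤ ∑ _p ∈ prs K, ENNReal.ofReal m := Finset.sum_le_sum heachp
        _ = (prs K).card • ENNReal.ofReal m := by rw [Finset.sum_const]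
        _ ≤ (K * K) • ENNReal.ofReal m := by
            have hcard : (prs K).card ≤ K * K := by
              rw [hprs]
              calc (Finset.filter (fun p : ℕ × ℕ => p.1 ≠ p.2)
                    (Finset.range K ×ˢ Finset.range K)).card
                  ≤ (Finset.range K ×ˢ Finset.range K).card := Finset.card_filter_le _ _
                _ = K * K := by rw [Finset.card_product, Finset.card_range]
            rw [nsmul_eq_mul, nsmul_eq_mul]
            exact mul_le_mul_left (by exact_mod_cast hcard) _
        _ ≤ ENNReal.ofReal (g2 K) := by
            rw [nsmul_eq_mul]
            have hcast : ((K*K : ℕ) : ℝ≥0∞) = ENNReal.ofReal ((K:ℝ) * (K:ℝ)) := by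
              rw [← ENNReal.ofReal_natCast]
              congr 1
              push_cast
              ring
            rw [hcast, ← ENNReal.ofReal_mul (by positivity)]
            apply ENNReal.ofReal_le_ofReal
            apply le_of_eq
            rw [hm, hg2def]
            simp only
            have h1 : aa K - Δ K - μ₀ = σ₀ * tt K - Δ K := by
              rw [haa]
              simp only
              ring
            have h2 : aa K - Δ K - Δ K = aa K - 2 * Δ K := by ring
            rw [h1, h2]
            ring
    -- E3
    have hE3 : P (⋃ k ∈ Finset.range K, {ω | (Δ K)⁻¹ < |X k ω|})
        ≤ ENNReal.ofReal (g3 K) := by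
      set r : ℝ := (Δ K)⁻¹ with hr
      have hrμ : μ₀ < r := lt_of_le_of_lt (le_abs_self μ₀) hSC4
      have hrμ2 : μ₀ < 2*μ₀ + r := by
        have := neg_le_abs μ₀
        linarith [hSC4]
      have hn1 : 0 ≤ σ₀^2/(r - μ₀) * gpdf μ₀ σ₀ r := by
        have h := gpdf_nonneg μ₀ σ₀ r
        have hd : 0 < r - μ₀ := by linarith
        positivity
      have hn2 : 0 ≤ σ₀^2/(μ₀ + r) * gpdf μ₀ σ₀ (2*μ₀ + r) := by
        have h := gpdf_nonneg μ₀ σ₀ (2*μ₀ + r)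
        have hd : 0 < μ₀ + r := by linarith
        positivity
      have heachk : ∀ k ∈ Finset.range K, P {ω | r < |X k ω|} ≤
          ENNReal.ofReal (σ₀^2/(r - μ₀) * gpdf μ₀ σ₀ r +
            σ₀^2/(μ₀ + r) * gpdf μ₀ σ₀ (2*μ₀ + r)) := by
        intro k _
        calc P {ω | r < |X k ω|}
            ≤ gmeas μ₀ σ₀ (Set.Ici r) + gmeas μ₀ σ₀ (Set.Iic (-r)) :=
              abs_tail_bound μ₀ hσ₀ (hmeas k) (hν k) r
          _ ≤ ENNReal.ofReal (σ₀^2/(r-μ₀) * gpdf μ₀ σ₀ r)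
              + ENNReal.ofReal (σ₀^2/(μ₀+r) * gpdf μ₀ σ₀ (2*μ₀+r)) := by
              apply add_le_add
              · exact gmeas_Ici_le μ₀ hσ₀ hrμ
              · rw [gmeas_Iic_eq_Ici μ₀ hσ₀,
                  show 2*μ₀ - (-r) = 2*μ₀ + r from by ring]
                have h := gmeas_Ici_le μ₀ hσ₀ hrμ2
                rw [show 2*μ₀ + r - μ₀ = μ₀ + r from by ring] at h
                exact h
          _ = ENNReal.ofReal (σ₀^2/(r - μ₀) * gpdf μ₀ σ₀ r +
              σ₀^2/(μ₀ + r) * gpdf μ₀ σ₀ (2*μ₀ + r)) := (ENNReal.ofReal_add hn1 hn2).symm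
      calc P (⋃ k ∈ Finset.range K, {ω | r < |X k ω|})
          ≤ ∑ k ∈ Finset.range K, P {ω | r < |X k ω|} := measure_biUnion_finset_le _ _
        _ ≤ ∑ _k ∈ Finset.range K, ENNReal.ofReal (σ₀^2/(r - μ₀) * gpdf μ₀ σ₀ r +
              σ₀^2/(μ₀ + r) * gpdf μ₀ σ₀ (2*μ₀ + r)) := Finset.sum_le_sum heachk
        _ = K • ENNReal.ofReal (σ₀^2/(r - μ₀) * gpdf μ₀ σ₀ r +
              σ₀^2/(μ₀ + r) * gpdf μ₀ σ₀ (2*μ₀ + r)) := by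
            rw [Finset.sum_const, Finset.card_range]
        _ = ENNReal.ofReal (g3 K) := by
            rw [nsmul_eq_mul, show ((K : ℕ) : ℝ≥0∞) = ENNReal.ofReal ((K:ℝ)) from
              (ENNReal.ofReal_natCast K).symm, ← ENNReal.ofReal_mul (by positivity),
              hg3def]
    -- E4
    have hE4 : P (⋃ p ∈ prs K, {ω | X p.1 ω = X p.2 ω}) = 0 := by
      apply le_antisymm _ zero_le
      calc P (⋃ p ∈ prs K, {ω | X p.1 ω = X p.2 ω})
          ≤ ∑ p ∈ prs K, P {ω | X p.1 ω = X p.2 ω} := measure_biUnion_finset_le _ _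
        _ = 0 := Finset.sum_eq_zero fun p hp => by
            have hij : p.1 ≠ p.2 := by
              rw [hprs] at hp
              exact (Finset.mem_filter.mp hp).2
            exact pair_eq_zero μ₀ hσ₀ (hmeas p.1) (hmeas p.2) (hindep.indepFun hij)
              (hν p.1) (hν p.2)
    -- combine
    calc P (bad K)
        ≤ P (⋂ k ∈ Finset.range K, {ω | X k ω ≤ aa K}) +
          (P (⋃ p ∈ prs K, {ω | aa K - Δ K < X p.1 ω ∧ |X p.2 ω - X p.1 ω| < Δ K}) +
          (P (⋃ k ∈ Finset.range K, {ω | (Δ K)⁻¹ < |X k ω|}) +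
           P (⋃ p ∈ prs K, {ω | X p.1 ω = X p.2 ω}))) := by
          simp only [hbad]
          refine (measure_union_le _ _).trans (add_le_add_right
            ((measure_union_le _ _).trans (add_le_add_right (measure_union_le _ _) _)) _)
      _ ≤ ENNReal.ofReal (g1 K) + (ENNReal.ofReal (g2 K) + (ENNReal.ofReal (g3 K) + 0)) :=
          add_le_add hE1 (add_le_add hE2 (add_le_add hE3 (le_of_eq hE4)))
      _ = ENNReal.ofReal (g1 K) + (ENNReal.ofReal (g2 K) + ENNReal.ofReal (g3 K)) := by
          rw [add_zero]
  -- STEP C : asymptotics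
  have hlogK : Tendsto L atTop atTop :=
    Real.tendsto_log_atTop.comp tendsto_natCast_atTop_atTop
  have hTfacts := hlogK.eventually (T_facts hβ0)
  have hΔ0 : Tendsto Δ atTop (nhds 0) := by
    have h := (tendsto_rpow_neg_atTop hη0).comp hlogK
    exact h.congr fun K => (hΔ K).symm
  have hrinv : Tendsto (fun K => (Δ K)⁻¹) atTop atTop := by
    have h := (tendsto_rpow_atTop hη0).comp hlogK
    apply h.congr'
    filter_upwards [hlogK.eventually (eventually_gt_atTop 0)] with K hLpos
    simp only [Function.comp]
    rw [hΔ K, Real.rpow_neg hLpos.le, inv_inv]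
  have hconds : ∀ᶠ K : ℕ in atTop, (K ≠ 0) ∧ 0 < Δ K ∧ Δ K * K ≤ (K:ℝ) - 1 ∧ 1 ≤ tt K ∧
      2 * Δ K ≤ σ₀ * tt K ∧ |μ₀| < (Δ K)⁻¹ := by
    filter_upwards [hTfacts,
      hΔ0.eventually_lt_const (show (0:ℝ) < min (σ₀/2) (1/2) from by positivity),
      hrinv.eventually_gt_atTop |μ₀|, eventually_ge_atTop 2] with K hTf hΔsm hμsm hK2
    obtain ⟨hT2, hTlb, hTub, hT1, hL1⟩ := hTf
    have hΔpos : 0 < Δ K := by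
      rw [hΔ K]
      exact Real.rpow_pos_of_pos (lt_of_lt_of_le one_pos hL1) _
    have hΔhalf : Δ K ≤ 1/2 := le_of_lt (lt_of_lt_of_le hΔsm (min_le_right _ _))
    have hΔσ : Δ K ≤ σ₀/2 := le_of_lt (lt_of_lt_of_le hΔsm (min_le_left _ _))
    have hKR : (2:ℝ) ≤ (K:ℝ) := by exact_mod_cast hK2
    refine ⟨by omega, hΔpos, by nlinarith, hT1, by nlinarith, hμsm⟩
  have hKexp : ∀ᶠ K : ℕ in atTop, Real.exp (L K) = (K:ℝ) := by
    filter_upwards [eventually_ge_atTop 1] with K hK1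
    have : (0:ℝ) < K := by exact_mod_cast Nat.lt_of_lt_of_le Nat.zero_lt_one hK1
    exact Real.exp_log this
  have htg1 : Tendsto g1 atTop (nhds 0) := by
    have hF := Real.tendsto_exp_atBot.comp
      (tendsto_neg_atTop_atBot.comp (limit1 μ₀ hσ₀ hβ1))
    apply (hF.comp hlogK).congr'
    filter_upwards [hKexp] with K hK
    simp only [Function.comp, hg1def]
    rw [hK]
  have htg2 : Tendsto g2 atTop (nhds 0) := by
    have hF := (limit2 μ₀ hσ₀ hη hβ0 hβ2).comp hlogK
    apply hF.congr'
    filter_upwards [hKexp] with K hK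
    simp only [Function.comp, hg2def]
    rw [hK, ← hΔ K]
  have htg3 : Tendsto g3 atTop (nhds 0) := by
    have hF := (limit3 μ₀ hσ₀ hη).comp hlogK
    apply hF.congr'
    filter_upwards [hKexp, hlogK.eventually (eventually_gt_atTop 0)] with K hK hLpos
    simp only [Function.comp, hg3def]
    have hinv : (L K) ^ η = (Δ K)⁻¹ := by
      rw [hΔ K, Real.rpow_neg hLpos.le, inv_inv]
    rw [hK, hinv]
  have hPbad : Tendsto (fun K => P (bad K)) atTop (nhds 0) := by
    refine tendsto_of_tendsto_of_tendsto_of_le_of_le'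
      (g := fun _ : ℕ => (0:ℝ≥0∞))
      (h := fun K => ENNReal.ofReal (g1 K) + (ENNReal.ofReal (g2 K) + ENNReal.ofReal (g3 K)))
      tendsto_const_nhds ?_ (Eventually.of_forall fun K => zero_le) ?_
    · have h1 := ENNReal.tendsto_ofReal (f := atTop) htg1
      have h2 := ENNReal.tendsto_ofReal (f := atTop) htg2
      have h3 := ENNReal.tendsto_ofReal (f := atTop) htg3
      rw [ENNReal.ofReal_zero] at h1 h2 h3
      have h := h1.add (h2.add h3)
      simpa using h
    · filter_upwards [hconds] with K hc
      exact hbound K hc.2.2.2.1 hc.2.1 hc.2.2.2.2.1 hc.2.2.2.2.2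
  have hlower : ∀ᶠ K : ℕ in atTop,
      1 - P (bad K) ≤ P {ω | (∀ k < K, X k ω < μstar K ω → X k ω ≤ μstar K ω - Δ K) ∧
               (∀ k < K, |X k ω| ≤ (Δ K)⁻¹) ∧
               Δ K * K ≤ (J K ω : ℝ)} := by
    filter_upwards [hconds] with K hc
    have h1 : P ((bad K)ᶜ) = 1 - P (bad K) := prob_compl_eq_one_sub (hmbad K)
    rw [← h1]
    exact measure_mono (hincl K hc.1 hc.2.1 hc.2.2.1)
  have h1t : Tendsto (fun K => 1 - P (bad K)) atTop (nhds 1) := by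
    have h := ENNReal.Tendsto.sub
      (tendsto_const_nhds : Tendsto (fun _ : ℕ => (1:ℝ≥0∞)) atTop (nhds 1)) hPbad
      (Or.inl ENNReal.one_ne_top)
    simpa using h
  exact tendsto_of_tendsto_of_tendsto_of_le_of_le' h1t tendsto_const_nhds hlower
    (Eventually.of_forall fun K => prob_le_one)
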